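/- Since ⟨f, d¹ - d⁰⟩ - (F_ε(d¹) - F_ε(d⁰)) = (1/(2ε²))(|d¹|²+1)|d¹-d⁰|² + (1/(4ε²))(|d¹|²-|d⁰|²)² ≥ 0, the semi-implicit convex-splitting treatment of the penalty term is energy-dissipative: ⟨f, d¹ - d⁰⟩ ≥ F_ε(d¹) - F_ε(d⁰). -/

import Mathlib

/-- Energy dissipation of the semi-implicit convex-splitting treatment of the
penalty term: `⟨f, d¹ - d⁰⟩ ≥ F_ε(d¹) - F_ε(d⁰)`. -/
theorem penalty_splitting_dissipative {n : ℕ} (d1 d0 : EuclideanSpace ℝ (Fin n))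
    (ε : ℝ) (hε : 0 < ε)
    (f : EuclideanSpace ℝ (Fin n))
    (hf : f = (1 / ε ^ 2) • (‖d1‖ ^ 2 • d1 - d0))
    (Fε : EuclideanSpace ℝ (Fin n) → ℝ)
    (hFε : ∀ v, Fε v = (1 / (4 * ε ^ 2)) * (‖v‖ ^ 2 - 1) ^ 2) :
    Fε d1 - Fε d0 ≤ (inner ℝ f (d1 - d0) : ℝ) := by
  subst hf
  rw [hFε, hFε]
  have hε2 : (0:ℝ) < ε ^ 2 := by positivity
  set a : ℝ := ‖d1‖ ^ 2 with ha
  set b : ℝ := ‖d0‖ ^ 2 with hb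
  set p : ℝ := inner ℝ d1 d0 with hp
  have h1 : (inner ℝ ((1 / ε ^ 2) • (a • d1 - d0)) (d1 - d0) : ℝ)
      = (1 / ε ^ 2) * (a * a - a * p - p + b) := by
    simp only [inner_sub_left, inner_sub_right, real_inner_smul_left,
      real_inner_smul_right, real_inner_self_eq_norm_sq, real_inner_comm d0 d1,
      ← ha, ← hb, ← hp]
    rw [hp, real_inner_comm d1 d0]; ring
  rw [h1]
  have h2 : ‖d1 - d0‖ ^ 2 = a - 2 * p + b := by
    rw [ha, hb, hp, norm_sub_sq_real]
  have h3 : (0:ℝ) ≤ a - 2 * p + b := h2 ▸ sq_nonneg _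
  have ha0 : (0:ℝ) ≤ a := sq_nonneg _
  have key : (a - 1) ^ 2 - (b - 1) ^ 2 ≤ 4 * (a * a - a * p - p + b) := by
    nlinarith [sq_nonneg (a - b), mul_nonneg (by linarith : (0:ℝ) ≤ a + 1) h3]
  calc 1 / (4 * ε ^ 2) * (a - 1) ^ 2 - 1 / (4 * ε ^ 2) * (b - 1) ^ 2
      = ((a - 1) ^ 2 - (b - 1) ^ 2) / (4 * ε ^ 2) := by ring
    _ ≤ (4 * (a * a - a * p - p + b)) / (4 * ε ^ 2) := by gcongr
    _ = 1 / ε ^ 2 * (a * a - a * p - p + b) := by field_simp
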